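/- Let G be a (P5, K5-e)-free graph containing a triangle on vertices v1, v2, v3, let Z be the set of vertices adjacent to all of v1, v2, v3, and for each i let Yi and Xi be as usual (vertices adjacent to exactly the triangle vertices other than vi, respectively adjacent only to vi). Fix i, let S be the vertex set of a component of the subgraph induced by Yi and R the vertex set of a component of the subgraph induced by Xi, and suppose some z ∈ Z has no neighbor in R. Then S is either complete to R or anticomplete to R. -/

import Mathlib

open SimpleGraph

/-- The complete graph on 5 vertices minus one edge. -/
def K5e : SimpleGraph (Fin 5) := (⊤ : SimpleGraph (Fin 5)).deleteEdges {s(0, 1)}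

/-- `H` has an induced copy in `G`. -/
def HasInducedCopy {W V : Type*} (H : SimpleGraph W) (G : SimpleGraph V) : Prop :=
  ∃ f : W ↪ V, ∀ a b : W, G.Adj (f a) (f b) ↔ H.Adj a b

/-- `G` contains no induced subgraph isomorphic to `H`. -/
def IsInducedFree {V W : Type*} (G : SimpleGraph V) (H : SimpleGraph W) : Prop :=
  ¬ HasInducedCopy H G

lemma mkP5 {V : Type*} (G : SimpleGraph V) (a b c d e : V)
    (hab : G.Adj a b) (hbc : G.Adj b c) (hcd : G.Adj c d) (hde : G.Adj d e)
    (hac : ¬G.Adj a c) (had : ¬G.Adj a d) (hae : ¬G.Adj a e)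
    (hbd : ¬G.Adj b d) (hbe : ¬G.Adj b e) (hce : ¬G.Adj c e) :
    HasInducedCopy (pathGraph 5) G := by
  have nab : a ≠ b := hab.ne
  have nbc : b ≠ c := hbc.ne
  have ncd : c ≠ d := hcd.ne
  have nde : d ≠ e := hde.ne
  have nac : a ≠ c := by rintro rfl; exact had hcd
  have nad : a ≠ d := by rintro rfl; exact hae hde
  have nae : a ≠ e := by rintro rfl; exact had hde.symm
  have nbd : b ≠ d := by rintro rfl; exact hbe hde
  have nbe : b ≠ e := by rintro rfl; exact hbd hde.symm
  have nce : c ≠ e := by rintro rfl; exact hbe hbc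
  have hba := hab.symm; have hcb := hbc.symm; have hdc := hcd.symm; have hed := hde.symm
  have hca : ¬G.Adj c a := fun h => hac h.symm
  have hda : ¬G.Adj d a := fun h => had h.symm
  have hea : ¬G.Adj e a := fun h => hae h.symm
  have hdb : ¬G.Adj d b := fun h => hbd h.symm
  have heb : ¬G.Adj e b := fun h => hbe h.symm
  have hec : ¬G.Adj e c := fun h => hce h.symm
  have hirr : ∀ x : V, ¬G.Adj x x := fun x => G.irrefl
  refine ⟨⟨![a,b,c,d,e], ?_⟩, ?_⟩
  · intro x y hxy
    fin_cases x <;> fin_cases y <;> simp_all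
  · intro x y
    show G.Adj (![a,b,c,d,e] x) (![a,b,c,d,e] y) ↔ _
    fin_cases x <;> fin_cases y <;>
      simp_all [pathGraph_adj] <;> decide

lemma mkK5e {V : Type*} (G : SimpleGraph V) (a b c d e : V) (nab : a ≠ b)
    (hac : G.Adj a c) (had : G.Adj a d) (hae : G.Adj a e)
    (hbc : G.Adj b c) (hbd : G.Adj b d) (hbe : G.Adj b e)
    (hcd : G.Adj c d) (hce : G.Adj c e) (hde : G.Adj d e)
    (hab : ¬G.Adj a b) :
    HasInducedCopy K5e G := by
  have nac : a ≠ c := hac.ne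
  have nad : a ≠ d := had.ne
  have nae : a ≠ e := hae.ne
  have nbc : b ≠ c := hbc.ne
  have nbd : b ≠ d := hbd.ne
  have nbe : b ≠ e := hbe.ne
  have ncd : c ≠ d := hcd.ne
  have nce : c ≠ e := hce.ne
  have nde : d ≠ e := hde.ne
  have hca := hac.symm; have hda := had.symm; have hea := hae.symm
  have hcb := hbc.symm; have hdb := hbd.symm; have heb := hbe.symm
  have hdc := hcd.symm; have hec := hce.symm; have hed := hde.symm
  have hba : ¬G.Adj b a := fun h => hab h.symm
  have hirr : ∀ x : V, ¬G.Adj x x := fun x => G.irrefl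
  refine ⟨⟨![a,b,c,d,e], ?_⟩, ?_⟩
  · intro x y hxy
    fin_cases x <;> fin_cases y <;> simp_all
  · intro x y
    show G.Adj (![a,b,c,d,e] x) (![a,b,c,d,e] y) ↔ _
    fin_cases x <;> fin_cases y <;>
      simp_all [K5e, deleteEdges_adj, top_adj] <;> decide

lemma walk_prop {V' : Type*} {G' : SimpleGraph V'} {c : G'.ConnectedComponent} {P : V' → Prop}
    (h : ∀ a ∈ c.supp, ∀ b ∈ c.supp, G'.Adj a b → P a → P b) :
    ∀ a ∈ c.supp, ∀ b ∈ c.supp, P a → P b := by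
  have key : ∀ {a b : V'}, G'.Walk a b → a ∈ c.supp → P a → P b := by
    intro a b w
    induction w with
    | nil => exact fun _ pa => pa
    | @cons u x y h' p ih =>
        intro hu pu
        have hx : x ∈ c.supp := by
          rw [ConnectedComponent.mem_supp_iff] at hu ⊢
          rw [← hu]; exact (ConnectedComponent.sound h'.reachable).symm
        exact ih hx (h u hu x hx h' pu)
  intro a ha b hb pa
  have hr : G'.Reachable a b := ConnectedComponent.exact (by
    rw [ConnectedComponent.mem_supp_iff] at ha hb; rw [ha, hb])
  exact key hr.some ha pa

theorem stmt_16 {V : Type*} (G : SimpleGraph V)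
    (hP5 : IsInducedFree G (pathGraph 5)) (hK5e : IsInducedFree G K5e)
    (v : Fin 3 → V) (hadj : ∀ i j, i ≠ j → G.Adj (v i) (v j))
    (X Y : Fin 3 → Set V) (Z : Set V)
    (hX : ∀ i, X i = {u | (∀ j, u ≠ v j) ∧ ∀ j, (G.Adj u (v j) ↔ j = i)})
    (hY : ∀ i, Y i = {u | (∀ j, u ≠ v j) ∧ ∀ j, (G.Adj u (v j) ↔ j ≠ i)})
    (hZ : Z = {u | ∀ j, G.Adj u (v j)})
    (i : Fin 3)
    (cS : (G.induce (Y i)).ConnectedComponent)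
    (cR : (G.induce (X i)).ConnectedComponent)
    (z : V) (hz : z ∈ Z) (hzR : ∀ r ∈ Subtype.val '' cR.supp, ¬ G.Adj z r) :
    (∀ s ∈ Subtype.val '' cS.supp, ∀ r ∈ Subtype.val '' cR.supp, G.Adj s r) ∨
    (∀ s ∈ Subtype.val '' cS.supp, ∀ r ∈ Subtype.val '' cR.supp, ¬ G.Adj s r) := by
  have hfin : ∀ k : Fin 3, k + 1 ≠ k ∧ k + 2 ≠ k ∧ k + 1 ≠ k + 2 := by decide
  obtain ⟨h1, h2, h12⟩ := hfin i
  have hzv : ∀ j, G.Adj z (v j) := by rw [hZ] at hz; exact hz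
  -- membership unfoldings
  have hYmem : ∀ y ∈ Y i, (∀ j, y ≠ v j) ∧ ∀ j, (G.Adj y (v j) ↔ j ≠ i) := by
    intro y hy; rw [hY] at hy; exact hy
  have hXmem : ∀ x ∈ X i, (∀ j, x ≠ v j) ∧ ∀ j, (G.Adj x (v j) ↔ j = i) := by
    intro x hx; rw [hX] at hx; exact hx
  -- Step 1 : z is nonadjacent to every vertex of Y i
  have hzY : ∀ y ∈ Y i, ¬ G.Adj z y := by
    intro y hy hadjzy
    obtain ⟨hyne, hyadj⟩ := hYmem y hy
    exact hK5e (mkK5e G (v i) y (v (i+1)) (v (i+2)) z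
      (Ne.symm (hyne i))
      (hadj i (i+1) (Ne.symm h1)) (hadj i (i+2) (Ne.symm h2)) ((hzv i).symm)
      ((hyadj (i+1)).mpr h1) ((hyadj (i+2)).mpr h2) hadjzy.symm
      (hadj (i+1) (i+2) h12) ((hzv (i+1)).symm) ((hzv (i+2)).symm)
      (fun h => (hyadj i).mp h.symm rfl))
  -- Step 2 : adjacency of y ∈ Y i propagates along edges of the component R
  have chainX : ∀ y ∈ Y i, ∀ r ∈ Subtype.val '' cR.supp, ∀ r' ∈ Subtype.val '' cR.supp,
      G.Adj r r' → G.Adj y r → G.Adj y r' := by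
    intro y hy r hr r' hr' hrr' hyr
    by_contra hyr'
    obtain ⟨hyne, hyadj⟩ := hYmem y hy
    have hrX : r ∈ X i := by obtain ⟨t, ht, rfl⟩ := hr; exact t.2
    have hr'X : r' ∈ X i := by obtain ⟨t, ht, rfl⟩ := hr'; exact t.2
    obtain ⟨hrne, hradj⟩ := hXmem r hrX
    obtain ⟨hr'ne, hr'adj⟩ := hXmem r' hr'X
    exact hP5 (mkP5 G r' r y (v (i+1)) z
      hrr'.symm hyr.symm ((hyadj (i+1)).mpr h1) ((hzv (i+1)).symm)
      (fun h => hyr' h.symm)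
      (fun h => h1 ((hr'adj (i+1)).mp h))
      (fun h => hzR r' hr' h.symm)
      (fun h => h1 ((hradj (i+1)).mp h))
      (fun h => hzR r hr h.symm)
      (fun h => hzY y hy h.symm))
  -- Step 3 : adjacency to a fixed r ∈ R propagates along edges of the component S
  have chainY : ∀ y ∈ Y i, ∀ y' ∈ Y i, G.Adj y y' → ∀ r ∈ Subtype.val '' cR.supp,
      G.Adj y r → G.Adj y' r := by
    intro y hy y' hy' hyy' r hr hyr
    by_contra hy'r
    obtain ⟨hyne, hyadj⟩ := hYmem y hy
    obtain ⟨hy'ne, hy'adj⟩ := hYmem y' hy'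
    have hrX : r ∈ X i := by obtain ⟨t, ht, rfl⟩ := hr; exact t.2
    obtain ⟨hrne, hradj⟩ := hXmem r hrX
    exact hP5 (mkP5 G y' y r (v i) z
      hyy'.symm hyr ((hradj i).mpr rfl) ((hzv i).symm)
      (fun h => hy'r h)
      (fun h => (hy'adj i).mp h rfl)
      (fun h => hzY y' hy' h.symm)
      (fun h => (hyadj i).mp h rfl)
      (fun h => hzY y hy h.symm)
      (fun h => hzR r hr h.symm))
  by_cases hex : ∃ s ∈ Subtype.val '' cS.supp, ∃ r ∈ Subtype.val '' cR.supp, G.Adj s r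
  · left
    obtain ⟨s0, hs0, r0, hr0, h00⟩ := hex
    intro s hs r hr
    obtain ⟨ts, hts, rfl⟩ := hs
    obtain ⟨ts0, hts0, rfl⟩ := hs0
    -- propagate within S
    have hs_r0 : G.Adj (↑ts) r0 := by
      refine walk_prop (P := fun t : ↥(Y i) => G.Adj ↑t r0) ?_ ts0 hts0 ts hts h00
      intro a ha b hb hab pa
      have hab' : G.Adj (↑a) (↑b) := by simpa using hab
      exact chainY (↑a) a.2 (↑b) b.2 hab' r0 hr0 pa
    -- propagate within R
    obtain ⟨tr, htr, rfl⟩ := hr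
    obtain ⟨tr0, htr0, rfl⟩ := hr0
    refine walk_prop (P := fun t : ↥(X i) => G.Adj (↑ts) ↑t) ?_ tr0 htr0 tr htr hs_r0
    intro a ha b hb hab pa
    have hab' : G.Adj (↑a) (↑b) := by simpa using hab
    exact chainX (↑ts) ts.2 (↑a) (Set.mem_image_of_mem _ ha) (↑b)
      (Set.mem_image_of_mem _ hb) hab' pa
  · right
    push_neg at hex
    exact hex
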